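/- For every pattern p of length 4 other than 2413 and 3142 (i.e., every Baxter permutation of length 4), s_n^2(p) = binomial(n,2) for all n ≥ 2. -/

import Mathlib

open Finset

/-- The word `σ` contains the pattern `p`: there is a subsequence of `σ`
order-isomorphic to `p`. -/
def ContainsPat {n ℓ : ℕ} {α β : Type*} [LinearOrder α] [LinearOrder β]
    (σ : Fin n → α) (p : Fin ℓ → β) : Prop :=
  ∃ g : Fin ℓ → Fin n, StrictMono g ∧ ∀ a b : Fin ℓ, σ (g a) < σ (g b) ↔ p a < p b

/-- `σ ∈ S_n` is an extension of the partial permutation `π`: on the non-hole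
positions, the relative order of the values of `σ` matches that of `π`. -/
def IsExtension {n : ℕ} {α : Type*} [LinearOrder α]
    (σ : Equiv.Perm (Fin n)) (π : Fin n → Option α) : Prop :=
  ∀ i j : Fin n, ∀ vi vj : α, π i = some vi → π j = some vj → (σ i < σ j ↔ vi < vj)

/-- The partial permutation `π` avoids the pattern `p`: every extension avoids `p`. -/
def PPAvoids {n ℓ : ℕ} {α β : Type*} [LinearOrder α] [LinearOrder β]
    (π : Fin n → Option α) (p : Fin ℓ → β) : Prop :=
  ∀ σ : Equiv.Perm (Fin n), IsExtension σ π → ¬ ContainsPat (⇑σ) p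

/-- `π` is a partial permutation of length `n` with `k` holes: each value of
`{1,…,n-k}` appears exactly once and there are exactly `k` holes. -/
def IsPPerm {n : ℕ} (k : ℕ) (π : Fin n → Option (Fin (n - k))) : Prop :=
  (Finset.univ.filter fun i => π i = none).card = k ∧
    ∀ v : Fin (n - k), ∃! i : Fin n, π i = some v

/-- `π` is a partial permutation whose holes are exactly at the positions in `H`. -/
def IsPPermH {n : ℕ} (H : Finset (Fin n)) (π : Fin n → Option (Fin (n - H.card))) : Prop :=
  (∀ i, π i = none ↔ i ∈ H) ∧ ∀ v : Fin (n - H.card), ∃! i : Fin n, π i = some v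

/-- `s_n^k(p)`: the number of `p`-avoiding partial permutations of length `n`
with `k` holes. -/
noncomputable def snk (n k : ℕ) {ℓ : ℕ} (p : Fin ℓ → Fin ℓ) : ℕ :=
  Nat.card {π : Fin n → Option (Fin (n - k)) // IsPPerm k π ∧ PPAvoids π p}

/-- `s_n^H(p)`: the number of `p`-avoiding partial permutations of length `n`
with hole set `H`. -/
noncomputable def snH {n ℓ : ℕ} (H : Finset (Fin n)) (p : Fin ℓ → Fin ℓ) : ℕ :=
  Nat.card {π : Fin n → Option (Fin (n - H.card)) // IsPPermH H π ∧ PPAvoids π p}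

/-- The number of permutations of length `m` avoiding the pattern `p`. -/
noncomputable def avoidCount (m : ℕ) {ℓ : ℕ} (p : Fin ℓ → Fin ℓ) : ℕ :=
  Nat.card {σ : Equiv.Perm (Fin m) // ¬ ContainsPat (⇑σ) p}

/-- `p` is a Baxter permutation: no indices `a < b < c = b+1 < d` such that
`(p a, p b, p c, p d)` is order-isomorphic to `2413` or `3142`. -/
def IsBaxter {ℓ : ℕ} (p : Fin ℓ → Fin ℓ) : Prop :=
  ¬ ∃ a b c d : Fin ℓ, a < b ∧ (b : ℕ) + 1 = (c : ℕ) ∧ c < d ∧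
    ((p c < p a ∧ p a < p d ∧ p d < p b) ∨ (p b < p d ∧ p d < p a ∧ p a < p c))


namespace PPaux

def c1 (r _s : Fin 3) : Fin 4 := r.castSucc
def c2 (r s : Fin 3) : Fin 4 := if r = s then r.succ else s.succ

def Qrel (p : Fin 4 → Fin 4) (r s : Fin 3) : Prop :=
  if r < s then p s.succ < p r.castSucc else ¬ (p r.succ < p s.castSucc)

instance (p : Fin 4 → Fin 4) (r s : Fin 3) : Decidable (Qrel p r s) := by
  unfold Qrel; infer_instance

def brk (p : Fin 4 → Fin 4) (r : Fin 3) : ℕ :=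
  (univ.filter fun s => s ≠ r ∧ Qrel p s r).card

def reg5 (x : Fin 5) : Option (Fin 3) :=
  if x = 0 then some 0 else if x = 2 then some 1 else if x = 4 then some 2 else none

lemma vec_eta {α : Type*} (f : Fin 4 → α) : ![f 0, f 1, f 2, f 3] = f := by
  funext i; fin_cases i <;> rfl

def CoreBad (p : Fin 4 → Fin 4) (ρ : Fin 4 → Fin 5) : Prop :=
  (∀ t₁ t₂ : Fin 4, t₁ ≤ t₂ → ρ t₁ ≤ ρ t₂) ∧
  ((univ.filter fun t => ρ t = 1).card ≤ 1) ∧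
  ((univ.filter fun t => ρ t = 3).card ≤ 1) ∧
  (∀ t₁ t₂ : Fin 4, t₁ < t₂ → ∀ r s : Fin 3,
      reg5 (ρ t₁) = some r → reg5 (ρ t₂) = some s →
      (p t₁ < p t₂ ↔ p (c2 r s) < p (c1 r s)))

instance (p : Fin 4 → Fin 4) (ρ : Fin 4 → Fin 5) : Decidable (CoreBad p ρ) := by
  unfold CoreBad; infer_instance

set_option maxRecDepth 10000 in
lemma coreOK_aux : ∀ p0 p1 p2 p3 : Fin 4, Function.Injective ![p0,p1,p2,p3] →
    ∀ a b c d : Fin 5, ¬ CoreBad ![p0,p1,p2,p3] ![a,b,c,d] := by decide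

lemma coreOK (p : Fin 4 → Fin 4) (hp : Function.Injective p) (ρ : Fin 4 → Fin 5) :
    ¬ CoreBad p ρ := by
  have := coreOK_aux (p 0) (p 1) (p 2) (p 3) (by rw [vec_eta]; exact hp)
    (ρ 0) (ρ 1) (ρ 2) (ρ 3)
  rwa [vec_eta, vec_eta] at this

set_option maxRecDepth 10000 in
lemma brk_lt_iff_aux : ∀ p0 p1 p2 p3 : Fin 4, Function.Injective ![p0,p1,p2,p3] →
    ![p0,p1,p2,p3] ≠ ![1, 3, 0, 2] → ![p0,p1,p2,p3] ≠ ![2, 0, 3, 1] →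
    ∀ r s : Fin 3, r ≠ s → (brk ![p0,p1,p2,p3] r < brk ![p0,p1,p2,p3] s ↔
      Qrel ![p0,p1,p2,p3] r s) := by decide

lemma brk_lt_iff (p : Fin 4 → Fin 4) (hp : Function.Injective p)
    (h1 : p ≠ ![1, 3, 0, 2]) (h2 : p ≠ ![2, 0, 3, 1]) (r s : Fin 3) (hrs : r ≠ s) :
    brk p r < brk p s ↔ Qrel p r s := by
  have := brk_lt_iff_aux (p 0) (p 1) (p 2) (p 3) (by rw [vec_eta]; exact hp)
    (by rw [vec_eta]; exact h1) (by rw [vec_eta]; exact h2) r s hrs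
  rwa [vec_eta] at this

set_option maxRecDepth 10000 in
lemma qrel_not_aux : ∀ p0 p1 p2 p3 : Fin 4, ∀ r s : Fin 3, r ≠ s →
    (Qrel ![p0,p1,p2,p3] r s ↔ ¬ Qrel ![p0,p1,p2,p3] s r) := by decide

lemma qrel_not (p : Fin 4 → Fin 4) (r s : Fin 3) (hrs : r ≠ s) :
    Qrel p r s ↔ ¬ Qrel p s r := by
  have := qrel_not_aux (p 0) (p 1) (p 2) (p 3) r s hrs
  rwa [vec_eta] at this

variable {m : ℕ}

def rkn (v : Fin m → ℚ) (i : Fin m) : ℕ := (univ.filter fun j => v j < v i).card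

lemma rkn_lt (v : Fin m → ℚ) (i : Fin m) : rkn v i < m := by
  have h : (univ.filter fun j => v j < v i) ⊂ univ := by
    refine Finset.ssubset_iff_of_subset (subset_univ _) |>.mpr ?_
    exact ⟨i, mem_univ _, by simp⟩
  simpa [rkn] using Finset.card_lt_card h

lemma rkn_lt_rkn (v : Fin m → ℚ) {i j : Fin m} (h : v i < v j) : rkn v i < rkn v j := by
  apply Finset.card_lt_card
  constructor
  · intro x hx; simp only [mem_filter, mem_univ, true_and] at hx ⊢; exact hx.trans h
  · intro hsub
    have := hsub (by simp [h] : i ∈ univ.filter fun x => v x < v j)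
    simp at this

lemma rkn_lt_iff (v : Fin m → ℚ) (hv : Function.Injective v) (i j : Fin m) :
    rkn v i < rkn v j ↔ v i < v j := by
  constructor
  · intro h
    rcases lt_trichotomy (v i) (v j) with h' | h' | h'
    · exact h'
    · exact absurd (hv h') (by rintro rfl; exact absurd h (lt_irrefl _))
    · exact absurd (rkn_lt_rkn v h') (by omega)
  · exact rkn_lt_rkn v

def rkF (v : Fin m → ℚ) (i : Fin m) : Fin m := ⟨rkn v i, rkn_lt v i⟩

lemma rkF_bijective (v : Fin m → ℚ) (hv : Function.Injective v) :
    Function.Bijective (rkF v) := by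
  rw [← Finite.injective_iff_bijective]
  intro i j hij
  by_contra hne
  rcases lt_trichotomy (v i) (v j) with h | h | h
  · have := rkn_lt_rkn v h; simp [rkF, Fin.ext_iff] at hij; omega
  · exact hne (hv h)
  · have := rkn_lt_rkn v h; simp [rkF, Fin.ext_iff] at hij; omega

/-- the permutation sorting by a key -/
noncomputable def rkP (v : Fin m → ℚ) (hv : Function.Injective v) : Equiv.Perm (Fin m) :=
  Equiv.ofBijective (rkF v) (rkF_bijective v hv)

lemma rkP_lt_iff (v : Fin m → ℚ) (hv : Function.Injective v) (i j : Fin m) :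
    rkP v hv i < rkP v hv j ↔ v i < v j := by
  simpa [rkP, Equiv.ofBijective, rkF, Fin.lt_def] using rkn_lt_iff v hv i j

/-- the interpolation function. -/
lemma exists_interp (r1 r2 : Fin 4) (hr : r1 ≠ r2) (v1 v2 : ℕ)
    (hv : v1 < v2 ↔ r1 < r2) (hne : v1 ≠ v2) :
    ∃ f : Fin 4 → ℚ, StrictMono f ∧ f r1 = v1 ∧ f r2 = v2 ∧
      (∀ u : Fin 4, u ≠ r1 → u ≠ r2 → ∀ k : ℕ, f u ≠ k) := by
  -- directional core
  have core : ∀ (a b : Fin 4), a < b → ∀ w1 w2 : ℕ, w1 < w2 →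
      ∃ f : Fin 4 → ℚ, StrictMono f ∧ f a = w1 ∧ f b = w2 ∧
        (∀ u : Fin 4, u ≠ a → u ≠ b → ∀ k : ℕ, f u ≠ k) := by
    intro a b hab w1 w2 hw
    have hw' : (w1 : ℚ) + 1 ≤ w2 := by exact_mod_cast Nat.succ_le_of_lt hw
    refine ⟨fun u => if u = a then (w1 : ℚ) else if u = b then (w2 : ℚ) else
      (if u < a then (w1 : ℚ) - 1 else if u < b then (w1 : ℚ) + 1/4 else (w2 : ℚ) + 1/4)
        + (2 * (u : ℚ) + 1) / 16, ?_, by simp [hab.ne'], ?_, ?_⟩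
    · rw [Fin.strictMono_iff_lt_succ]
      intro i
      fin_cases a <;> fin_cases b <;>
        first
          | exact absurd hab (by decide)
          | (fin_cases i <;> simp only [Fin.ext_iff, Fin.lt_def] <;> norm_num <;> linarith)
    · simp [hab.ne, hab.ne']
    · intro u hua hub k
      simp only [if_neg hua, if_neg hub]
      intro h
      split_ifs at h with h1 h2
      · have : (16 : ℚ) * k = 16 * w1 - 16 + 2 * u + 1 := by linarith
        have : (16 : ℤ) * k = 16 * w1 - 16 + 2 * (u : ℕ) + 1 := by exact_mod_cast this
        omega
      · have : (16 : ℚ) * k = 16 * w1 + 4 + 2 * u + 1 := by linarith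
        have : (16 : ℤ) * k = 16 * w1 + 4 + 2 * (u : ℕ) + 1 := by exact_mod_cast this
        omega
      · have : (16 : ℚ) * k = 16 * w2 + 4 + 2 * u + 1 := by linarith
        have : (16 : ℤ) * k = 16 * w2 + 4 + 2 * (u : ℕ) + 1 := by exact_mod_cast this
        omega
  rcases hr.lt_or_gt with h | h
  · have hv1 : v1 < v2 := hv.mpr h
    exact core r1 r2 h v1 v2 hv1
  · have hv1 : v2 < v1 := by
      rcases Nat.lt_trichotomy v1 v2 with h' | h' | h'
      · exact absurd (hv.mp h') (asymm h)
      · exact absurd h' hne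
      · exact h'
    obtain ⟨f, hf, h2, h1, hni⟩ := core r2 r1 h v2 v1 hv1
    exact ⟨f, hf, h1, h2, fun u hu1 hu2 => hni u hu2 hu1⟩

section REG
variable (p : Fin 4 → Fin 4) {n : ℕ} (h1 h2 : Fin n)

def reg (i : Fin n) : Fin 3 := if i < h1 then 0 else if i < h2 then 1 else 2

def dir (r : Fin 3) : ℚ := if p r.succ < p r.castSucc then 1 else -1

def kap (i : Fin n) : ℚ :=
  (2 * n + 1) * brk p (reg h1 h2 i) + dir p (reg h1 h2 i) * i.val

lemma reg_mono {i j : Fin n} (hij : i ≤ j) : reg h1 h2 i ≤ reg h1 h2 j := by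
  unfold reg
  split_ifs <;>
    first
      | decide
      | (exfalso; simp only [Fin.lt_def, Fin.le_def, not_lt] at *; omega)

lemma dir_mul_le (r : Fin 3) (x : Fin n) :
    dir p r * x.val ≤ n ∧ -(n : ℚ) ≤ dir p r * x.val := by
  have hx : (x.val : ℚ) < n := by exact_mod_cast x.isLt
  have hx0 : (0 : ℚ) ≤ x.val := by positivity
  unfold dir
  split_ifs <;> constructor <;> linarith

lemma kap_trich (hp : Function.Injective p)
    (hB1 : p ≠ ![1, 3, 0, 2]) (hB2 : p ≠ ![2, 0, 3, 1])
    {i j : Fin n} (hij : i < j) :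
    (kap p h1 h2 i < kap p h1 h2 j ↔
      p (c2 (reg h1 h2 i) (reg h1 h2 j)) < p (c1 (reg h1 h2 i) (reg h1 h2 j))) ∧
    kap p h1 h2 i ≠ kap p h1 h2 j := by
  have hrs : reg h1 h2 i ≤ reg h1 h2 j := reg_mono h1 h2 hij.le
  set r := reg h1 h2 i with hr
  set s := reg h1 h2 j with hs
  have hijq : (i.val : ℚ) < j.val := by exact_mod_cast hij
  rcases eq_or_lt_of_le hrs with heq | hlt
  · -- same region
    have hc1 : c1 r s = r.castSucc := rfl
    have hc2 : c2 r s = r.succ := by rw [c2, if_pos heq]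
    rw [hc1, hc2]
    have hki : kap p h1 h2 i = (2 * n + 1) * brk p r + dir p r * i.val := by
      rw [kap, ← hr]
    have hkj : kap p h1 h2 j = (2 * n + 1) * brk p r + dir p r * j.val := by
      rw [kap, ← hs, ← heq]
    rw [hki, hkj]
    by_cases hd : p r.succ < p r.castSucc
    · simp only [dir, if_pos hd]
      exact ⟨⟨fun _ => hd, fun _ => by linarith⟩, by intro h; nlinarith⟩
    · simp only [dir, if_neg hd]
      refine ⟨⟨fun h => absurd (by nlinarith : (j.val : ℚ) < i.val) (by exact_mod_cast (not_lt.mpr hij.le)), fun h => absurd h hd⟩, ?_⟩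
      intro h; nlinarith
  · -- r < s
    have hqiff : brk p r < brk p s ↔ Qrel p r s := brk_lt_iff p hp hB1 hB2 r s hlt.ne
    have hRHS : (p (c2 r s) < p (c1 r s)) ↔ Qrel p r s := by
      rw [c2, if_neg hlt.ne, c1, Qrel, if_pos hlt]
    have hb1 := dir_mul_le p (r := r) (x := i) (n := n)
    have hb2 := dir_mul_le p (r := s) (x := j) (n := n)
    by_cases hq : Qrel p r s
    · have hbrk : (brk p r : ℚ) + 1 ≤ brk p s := by
        have := hqiff.mpr hq; exact_mod_cast Nat.succ_le_of_lt this
      have hn : (1 : ℚ) ≤ 2 * n + 1 := by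
        have : (0 : ℚ) ≤ n := by positivity
        linarith
      constructor
      · rw [hRHS]; constructor <;> intro _
        · exact hq
        · unfold kap; rw [← hr, ← hs]; nlinarith [hb1.1, hb1.2, hb2.1, hb2.2]
      · intro hcontra
        have : kap p h1 h2 i < kap p h1 h2 j := by
          unfold kap; rw [← hr, ← hs]; nlinarith [hb1.1, hb1.2, hb2.1, hb2.2]
        exact absurd hcontra this.ne
    · have hq' : Qrel p s r := by
        by_contra hq2
        exact hq ((qrel_not p r s hlt.ne).mpr hq2)
      have hbrk : (brk p s : ℚ) + 1 ≤ brk p r := by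
        have := (brk_lt_iff p hp hB1 hB2 s r hlt.ne').mpr hq'
        exact_mod_cast Nat.succ_le_of_lt this
      have hgt : kap p h1 h2 j < kap p h1 h2 i := by
        unfold kap; rw [← hr, ← hs]; nlinarith [hb1.1, hb1.2, hb2.1, hb2.2]
      constructor
      · rw [hRHS]; constructor
        · intro h; exact absurd (h.trans hgt) (lt_irrefl _)
        · intro h; exact absurd h hq
      · exact fun h => absurd (h ▸ hgt) (lt_irrefl _)

end REG

section PI0
variable (p : Fin 4 → Fin 4) {n : ℕ} (h1 h2 : Fin n)

def ktop (i : Fin n) : ℚ :=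
  if i = h1 ∨ i = h2 then 9 * (n : ℚ) ^ 2 + 9 + i.val else kap p h1 h2 i

lemma kap_le (i : Fin n) : kap p h1 h2 i ≤ 7 * n + 3 := by
  have hb : (brk p (reg h1 h2 i) : ℚ) ≤ 3 := by
    have : brk p (reg h1 h2 i) ≤ 3 := by
      calc brk p (reg h1 h2 i) ≤ (univ : Finset (Fin 3)).card := card_le_card (filter_subset _ _)
      _ = 3 := by simp
    exact_mod_cast this
  have := (dir_mul_le p (reg h1 h2 i) i (n := n)).1
  have hn : (0:ℚ) ≤ n := by positivity
  unfold kap; nlinarith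

lemma kap_lt_ktop_hole (i : Fin n) (x : Fin n) (hx : x = h1 ∨ x = h2) :
    kap p h1 h2 i < ktop p h1 h2 x := by
  rw [ktop, if_pos hx]
  have := kap_le p h1 h2 i
  have hn : (0:ℚ) ≤ n := by positivity
  have hx0 : (0:ℚ) ≤ x.val := by positivity
  nlinarith

lemma ktop_inj (hh : h1 < h2) (hp : Function.Injective p)
    (hB1 : p ≠ ![1, 3, 0, 2]) (hB2 : p ≠ ![2, 0, 3, 1]) :
    Function.Injective (ktop p h1 h2) := by
  intro x y hxy
  by_cases hx : x = h1 ∨ x = h2 <;> by_cases hy : y = h1 ∨ y = h2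
  · rw [ktop, if_pos hx, ktop, if_pos hy] at hxy
    have : (x.val : ℚ) = y.val := by linarith
    exact Fin.ext (by exact_mod_cast this)
  · exfalso
    have hlt := kap_lt_ktop_hole p h1 h2 y x hx
    rw [hxy, ktop, if_neg hy] at hlt
    exact absurd hlt (lt_irrefl _)
  · exfalso
    have hlt := kap_lt_ktop_hole p h1 h2 x y hy
    rw [← hxy, ktop, if_neg hx] at hlt
    exact absurd hlt (lt_irrefl _)
  · rw [ktop, if_neg hx, ktop, if_neg hy] at hxy
    rcases lt_trichotomy x y with h | h | h
    · exact absurd hxy (kap_trich p h1 h2 hp hB1 hB2 h).2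
    · exact h
    · exact absurd hxy.symm (kap_trich p h1 h2 hp hB1 hB2 h).2

lemma visible_filter_card (hh : h1 < h2) :
    (univ.filter fun i : Fin n => ¬(i = h1 ∨ i = h2)).card = n - 2 := by
  have h2' : (univ.filter fun i : Fin n => (i = h1 ∨ i = h2)) = {h1, h2} := by
    ext x; simp [mem_insert]
  rw [filter_not, card_sdiff_of_subset (filter_subset _ _), h2', card_univ]
  simp [card_insert_of_notMem, hh.ne]

lemma rkn_vis_lt (hh : h1 < h2) (hp : Function.Injective p)
    (hB1 : p ≠ ![1, 3, 0, 2]) (hB2 : p ≠ ![2, 0, 3, 1])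
    (i : Fin n) (hi : ¬(i = h1 ∨ i = h2)) : rkn (ktop p h1 h2) i < n - 2 := by
  have hk1 : ktop p h1 h2 i < ktop p h1 h2 h1 := by
    rw [ktop, if_neg hi]; exact kap_lt_ktop_hole p h1 h2 i h1 (Or.inl rfl)
  have hk2 : ktop p h1 h2 h1 < ktop p h1 h2 h2 := by
    rw [ktop, if_pos (Or.inl rfl), ktop, if_pos (Or.inr rfl)]
    have : (h1.val : ℚ) < h2.val := by exact_mod_cast hh
    linarith
  have r1 := rkn_lt_rkn (ktop p h1 h2) hk1
  have r2 := rkn_lt_rkn (ktop p h1 h2) hk2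
  have r3 := rkn_lt (ktop p h1 h2) h2
  omega

def pi0 (hh : h1 < h2) (hp : Function.Injective p)
    (hB1 : p ≠ ![1, 3, 0, 2]) (hB2 : p ≠ ![2, 0, 3, 1]) :
    Fin n → Option (Fin (n - 2)) := fun i =>
  if hi : i = h1 ∨ i = h2 then none
  else some ⟨rkn (ktop p h1 h2) i, rkn_vis_lt p h1 h2 hh hp hB1 hB2 i hi⟩

variable {hh : h1 < h2} {hp : Function.Injective p}
  {hB1 : p ≠ ![1, 3, 0, 2]} {hB2 : p ≠ ![2, 0, 3, 1]}

lemma rkn_hole_ge (x : Fin n) (hx : x = h1 ∨ x = h2) (hh : h1 < h2) :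
    n - 2 ≤ rkn (ktop p h1 h2) x := by
  rw [← visible_filter_card h1 h2 hh]
  apply card_le_card
  intro j hj
  simp only [mem_filter, mem_univ, true_and] at hj ⊢
  rw [ktop, if_neg hj]
  exact kap_lt_ktop_hole p h1 h2 j x hx

lemma pi0_none_iff (i : Fin n) :
    pi0 p h1 h2 hh hp hB1 hB2 i = none ↔ (i = h1 ∨ i = h2) := by
  unfold pi0; split_ifs with h <;> simp [h]

lemma pi0_isPPerm : IsPPerm 2 (pi0 p h1 h2 hh hp hB1 hB2) := by
  constructor
  · have : (univ.filter fun i : Fin n => pi0 p h1 h2 hh hp hB1 hB2 i = none) = {h1, h2} := by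
      ext x; simp [pi0_none_iff, mem_insert]
    rw [this]
    simp [card_insert_of_notMem, hh.ne]
  · intro v
    have hv : v.val < n := by have := v.isLt; omega
    obtain ⟨i, hi⟩ := (rkF_bijective (ktop p h1 h2) (ktop_inj p h1 h2 hh hp hB1 hB2)).2 ⟨v.val, hv⟩
    have hival : rkn (ktop p h1 h2) i = v.val := by
      simpa [rkF, Fin.ext_iff] using hi
    have hvis : ¬(i = h1 ∨ i = h2) := by
      intro hx
      have := rkn_hole_ge p h1 h2 i hx hh
      have := v.isLt
      omega
    refine ⟨i, ?_, ?_⟩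
    · simp only [pi0]
      rw [dif_neg hvis]
      exact congrArg some (Fin.ext hival)
    · intro j hj
      simp only [pi0] at hj
      split_ifs at hj with hjv
      have hjval : rkn (ktop p h1 h2) j = v.val := by
        simpa [Fin.ext_iff] using hj
      have : rkF (ktop p h1 h2) j = rkF (ktop p h1 h2) i := by
        simp [rkF, Fin.ext_iff, hjval, hival]
      exact (rkF_bijective (ktop p h1 h2) (ktop_inj p h1 h2 hh hp hB1 hB2)).1 this

def cls (i : Fin n) : Fin 5 :=
  if i < h1 then 0 else if i = h1 then 1 else if i < h2 then 2 else if i = h2 then 3 else 4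

lemma cls_mono {i j : Fin n} (hij : i ≤ j) : cls h1 h2 i ≤ cls h1 h2 j := by
  unfold cls
  split_ifs <;>
    first
      | decide
      | (exfalso; simp only [Fin.lt_def, Fin.le_def, Fin.ext_iff, not_lt] at *; omega)

lemma cls_eq_one {i : Fin n} (h : cls h1 h2 i = 1) : i = h1 := by
  unfold cls at h
  split_ifs at h <;> first | assumption | exact absurd h (by decide)

lemma cls_eq_three {i : Fin n} (h : cls h1 h2 i = 3) : i = h2 := by
  unfold cls at h
  split_ifs at h <;> first | assumption | exact absurd h (by decide)

lemma cls_reg5 (hh : h1 < h2) {i : Fin n} {r : Fin 3} (h : reg5 (cls h1 h2 i) = some r) :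
    ¬(i = h1 ∨ i = h2) ∧ reg h1 h2 i = r := by
  unfold cls at h
  unfold reg
  split_ifs at h with a b c d
  · have hr0 : r = 0 := by simpa [reg5] using h.symm
    subst hr0
    refine ⟨?_, by rw [if_pos a]⟩
    push_neg
    exact ⟨ne_of_lt a, ne_of_lt (a.trans hh)⟩
  · exact absurd h (by simp [reg5])
  · have hr0 : r = 1 := by simpa [reg5] using h.symm
    subst hr0
    refine ⟨?_, by rw [if_neg a, if_pos c]⟩
    push_neg
    exact ⟨b, ne_of_lt c⟩
  · exact absurd h (by simp [reg5])
  · have hr0 : r = 2 := by simpa [reg5] using h.symm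
    subst hr0
    have hih2 : ¬ i < h2 := by
      simp only [not_lt]
      rcases lt_trichotomy i h2 with hl | hl | hl
      · exact absurd hl c
      · exact absurd hl d
      · exact hl.le
    refine ⟨by push_neg; exact ⟨b, d⟩, ?_⟩
    rw [if_neg (fun hcon => hih2 (hcon.trans hh)), if_neg hih2]

lemma pi0_avoids : PPAvoids (pi0 p h1 h2 hh hp hB1 hB2) p := by
  rintro σ hext ⟨g, hg, hiso⟩
  refine coreOK p hp (fun t => cls h1 h2 (g t)) ⟨?_, ?_, ?_, ?_⟩
  · intro t1 t2 ht
    exact cls_mono h1 h2 (hg.monotone ht)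
  · rw [Finset.card_le_one]
    intro a ha b hb
    simp only [mem_filter, mem_univ, true_and] at ha hb
    exact hg.injective ((cls_eq_one h1 h2 ha).trans (cls_eq_one h1 h2 hb).symm)
  · rw [Finset.card_le_one]
    intro a ha b hb
    simp only [mem_filter, mem_univ, true_and] at ha hb
    exact hg.injective ((cls_eq_three h1 h2 ha).trans (cls_eq_three h1 h2 hb).symm)
  · intro t1 t2 ht r s hr hs
    obtain ⟨hv1, hreg1⟩ := cls_reg5 h1 h2 hh hr
    obtain ⟨hv2, hreg2⟩ := cls_reg5 h1 h2 hh hs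
    have hglt : g t1 < g t2 := hg ht
    have e1 : pi0 p h1 h2 hh hp hB1 hB2 (g t1)
        = some ⟨rkn (ktop p h1 h2) (g t1), rkn_vis_lt p h1 h2 hh hp hB1 hB2 _ hv1⟩ := by
      simp only [pi0]; rw [dif_neg hv1]
    have e2 : pi0 p h1 h2 hh hp hB1 hB2 (g t2)
        = some ⟨rkn (ktop p h1 h2) (g t2), rkn_vis_lt p h1 h2 hh hp hB1 hB2 _ hv2⟩ := by
      simp only [pi0]; rw [dif_neg hv2]
    have hσ := hext (g t1) (g t2) _ _ e1 e2
    rw [← hiso t1 t2, hσ]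
    have hkt : ktop p h1 h2 (g t1) = kap p h1 h2 (g t1) := by rw [ktop, if_neg hv1]
    have hkt2 : ktop p h1 h2 (g t2) = kap p h1 h2 (g t2) := by rw [ktop, if_neg hv2]
    have := (kap_trich p h1 h2 hp hB1 hB2 hglt).1
    rw [hreg1, hreg2] at this
    rw [Fin.lt_def]
    rw [rkn_lt_iff (ktop p h1 h2) (ktop_inj p h1 h2 hh hp hB1 hB2), hkt, hkt2]
    exact this

end PI0

section NEC
variable (p : Fin 4 → Fin 4) {n : ℕ}

lemma build_ext (hp : Function.Injective p)
    (π : Fin n → Option (Fin (n - 2)))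
    (huniq : ∀ v : Fin (n - 2), ∃! x : Fin n, π x = some v)
    {h1 h2 i j : Fin n} (hh : h1 < h2)
    (hnone : ∀ x, π x = none ↔ (x = h1 ∨ x = h2))
    {vi vj : Fin (n - 2)} (hvi : π i = some vi) (hvj : π j = some vj)
    (a b d1 d2 : Fin 4)
    (hab : a ≠ b) (had1 : a ≠ d1) (had2 : a ≠ d2) (hbd1 : b ≠ d1)
    (hbd2 : b ≠ d2) (hd12 : d1 ≠ d2)
    (g : Fin 4 → Fin n) (hg : StrictMono g)
    (hga : g a = i) (hgb : g b = j) (hgd1 : g d1 = h1) (hgd2 : g d2 = h2)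
    (f : Fin 4 → ℚ) (hf : StrictMono f)
    (hfa : f (p a) = vi.val) (hfb : f (p b) = vj.val)
    (hfni : ∀ u : Fin 4, u ≠ p a → u ≠ p b → ∀ k : ℕ, f u ≠ k) :
    ¬ PPAvoids π p := by
  intro havoid
  -- the key function
  set pv : Fin n → ℚ := fun x => (π x).elim 0 (fun w => (w.val : ℚ)) with hpv
  set κ : Fin n → ℚ := fun x =>
    if x = h1 then f (p d1) else if x = h2 then f (p d2) else pv x with hκ
  have hvis : ∀ x : Fin n, ¬(x = h1 ∨ x = h2) → ∃ w, π x = some w := by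
    intro x hx
    rcases hw : π x with _ | w
    · exact absurd ((hnone x).mp hw) hx
    · exact ⟨w, rfl⟩
  have hκvis : ∀ (x : Fin n) (w : Fin (n - 2)), π x = some w → κ x = w.val := by
    intro x w hw
    have hx1 : x ≠ h1 := fun hc => by
      rw [hc] at hw; rw [(hnone h1).mpr (Or.inl rfl)] at hw; exact nomatch hw
    have hx2 : x ≠ h2 := fun hc => by
      rw [hc] at hw; rw [(hnone h2).mpr (Or.inr rfl)] at hw; exact nomatch hw
    simp only [hκ, if_neg hx1, if_neg hx2, hpv, hw, Option.elim]
  have hπinj : ∀ (x y : Fin n) (w : Fin (n - 2)), π x = some w → π y = some w → x = y := by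
    intro x y w hx hy
    obtain ⟨_, _, hu⟩ := huniq w
    exact (hu x hx).trans (hu y hy).symm
  have hκh1 : κ h1 = f (p d1) := by simp only [hκ, if_pos rfl]
  have hκh2 : κ h2 = f (p d2) := by simp [hκ, hh.ne']
  have hκinj : Function.Injective κ := by
    intro x y hxy
    by_cases hx : x = h1 ∨ x = h2 <;> by_cases hy : y = h1 ∨ y = h2
    · rcases hx with rfl | rfl <;> rcases hy with rfl | rfl
      · rfl
      · rw [hκh1, hκh2] at hxy
        exact absurd (hp (hf.injective hxy)) hd12
      · rw [hκh1, hκh2] at hxy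
        exact absurd (hp (hf.injective hxy.symm)) hd12
      · rfl
    · exfalso
      obtain ⟨w, hw⟩ := hvis y hy
      rw [hκvis y w hw] at hxy
      rcases hx with rfl | rfl
      · rw [hκh1] at hxy
        exact hfni (p d1) (fun hc => had1 (hp hc).symm) (fun hc => hbd1 (hp hc).symm) w.val hxy
      · rw [hκh2] at hxy
        exact hfni (p d2) (fun hc => had2 (hp hc).symm) (fun hc => hbd2 (hp hc).symm) w.val hxy
    · exfalso
      obtain ⟨w, hw⟩ := hvis x hx
      rw [hκvis x w hw] at hxy
      rcases hy with rfl | rfl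
      · rw [hκh1] at hxy
        exact hfni (p d1) (fun hc => had1 (hp hc).symm) (fun hc => hbd1 (hp hc).symm) w.val hxy.symm
      · rw [hκh2] at hxy
        exact hfni (p d2) (fun hc => had2 (hp hc).symm) (fun hc => hbd2 (hp hc).symm) w.val hxy.symm
    · obtain ⟨wx, hwx⟩ := hvis x hx
      obtain ⟨wy, hwy⟩ := hvis y hy
      rw [hκvis x wx hwx, hκvis y wy hwy] at hxy
      have : wx = wy := Fin.ext (by exact_mod_cast hxy)
      exact hπinj x y wx hwx (this ▸ hwy)
  have hext : IsExtension (rkP κ hκinj) π := by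
    intro x y vx vy hx hy
    rw [rkP_lt_iff κ hκinj, hκvis x vx hx, hκvis y vy hy]
    exact ⟨fun h => by exact_mod_cast h, fun h => by exact_mod_cast h⟩
  apply havoid (rkP κ hκinj) hext
  refine ⟨g, hg, fun t u => ?_⟩
  have hcover : ∀ t : Fin 4, t = a ∨ t = b ∨ t = d1 ∨ t = d2 := by
    intro t
    have hcard : ({a, b, d1, d2} : Finset (Fin 4)).card = 4 := by
      rw [card_insert_of_notMem (by simp [hab, had1, had2]),
        card_insert_of_notMem (by simp [hbd1, hbd2]),
        card_insert_of_notMem (by simp [hd12]), card_singleton]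
    have : ({a, b, d1, d2} : Finset (Fin 4)) = univ :=
      eq_univ_of_card _ (by rw [hcard]; rfl)
    have ht : t ∈ ({a, b, d1, d2} : Finset (Fin 4)) := this ▸ mem_univ t
    simpa using ht
  have hκg : ∀ t : Fin 4, κ (g t) = f (p t) := by
    intro t
    rcases hcover t with rfl | rfl | rfl | rfl
    · rw [hga, hκvis i vi hvi, hfa]
    · rw [hgb, hκvis j vj hvj, hfb]
    · rw [hgd1, hκh1]
    · rw [hgd2, hκh2]
  rw [rkP_lt_iff κ hκinj, hκg t, hκg u]
  exact hf.lt_iff_lt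
end NEC

section NEC2
variable (p : Fin 4 → Fin 4) {n : ℕ} (h1 h2 : Fin n)

lemma reg_zero {i : Fin n} (h : reg h1 h2 i = 0) : i < h1 := by
  unfold reg at h; split_ifs at h <;> first | assumption | exact absurd h (by decide)

lemma reg_one {i : Fin n} (h : reg h1 h2 i = 1) : ¬ i < h1 ∧ i < h2 := by
  unfold reg at h
  split_ifs at h with a b <;>
    first | exact ⟨a, b⟩ | exact absurd h (by decide)

lemma reg_two {i : Fin n} (h : reg h1 h2 i = 2) : ¬ i < h2 := by
  unfold reg at h
  split_ifs at h with a b <;> first | assumption | exact absurd h (by decide)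

lemma c1_ne_c2 : ∀ r s : Fin 3, r ≤ s → c1 r s ≠ c2 r s := by decide

lemma nec (hp : Function.Injective p)
    (π : Fin n → Option (Fin (n - 2)))
    (huniq : ∀ v : Fin (n - 2), ∃! x : Fin n, π x = some v)
    (hnone : ∀ x, π x = none ↔ (x = h1 ∨ x = h2))
    (havoid : PPAvoids π p) (hh : h1 < h2)
    {i j : Fin n} (hij : i < j) {vi vj : Fin (n - 2)}
    (hvi : π i = some vi) (hvj : π j = some vj) :
    (vi < vj ↔ p (c2 (reg h1 h2 i) (reg h1 h2 j)) < p (c1 (reg h1 h2 i) (reg h1 h2 j))) := by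
  have hvsi : ¬(i = h1 ∨ i = h2) := by
    intro hc
    rw [(hnone i).mpr hc] at hvi; exact nomatch hvi
  have hvsj : ¬(j = h1 ∨ j = h2) := by
    intro hc
    rw [(hnone j).mpr hc] at hvj; exact nomatch hvj
  by_contra hcon
  have hvine : vi ≠ vj := by
    intro hc
    obtain ⟨_, _, hu⟩ := huniq vi
    exact absurd ((hu i hvi).trans (hu j (hc ▸ hvj)).symm) hij.ne
  set r := reg h1 h2 i with hrdef
  set s := reg h1 h2 j with hsdef
  have hrs : r ≤ s := reg_mono h1 h2 hij.le
  have hp12 : p (c1 r s) ≠ p (c2 r s) := fun h => c1_ne_c2 r s hrs (hp h)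
  have hiff : vi.val < vj.val ↔ p (c1 r s) < p (c2 r s) := by
    rcases lt_or_gt_of_ne hvine with h | h
    · have hX : ¬ p (c2 r s) < p (c1 r s) := fun hx => hcon (iff_of_true h hx)
      exact iff_of_true (by exact_mod_cast h) ((lt_or_gt_of_ne hp12).resolve_right hX)
    · have hX : p (c2 r s) < p (c1 r s) := by
        by_contra hx
        exact hcon (iff_of_false (asymm h) hx)
      exact iff_of_false (by exact_mod_cast not_lt.mpr h.le) (asymm hX)
  obtain ⟨f, hf, hfa, hfb, hfni⟩ :=
    exists_interp (p (c1 r s)) (p (c2 r s)) hp12 vi.val vj.val hiff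
      (fun hc => hvine (Fin.ext hc))
  have hine1 : i ≠ h1 := fun hc => hvsi (Or.inl hc)
  have hine2 : i ≠ h2 := fun hc => hvsi (Or.inr hc)
  have hjne1 : j ≠ h1 := fun hc => hvsj (Or.inl hc)
  have hjne2 : j ≠ h2 := fun hc => hvsj (Or.inr hc)
  have h3 : ∀ z : Fin 3, z = 0 ∨ z = 1 ∨ z = 2 := by decide
  have habs : ∀ {P : Prop}, ¬ PPAvoids π p → P := fun h => absurd havoid h
  rcases h3 r with hr | hr | hr <;> rcases h3 s with hs | hs | hs <;>
    rw [hr, hs] at hfa hfb hfni hp12 <;>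
    [skip; skip; skip;
     exact absurd (hr ▸ hs ▸ hrs) (by decide);
     skip; skip;
     exact absurd (hr ▸ hs ▸ hrs) (by decide);
     exact absurd (hr ▸ hs ▸ hrs) (by decide);
     skip]
  · -- (0,0)
    have pi1 : i < h1 := reg_zero h1 h2 (hrdef ▸ hr)
    have pj1 : j < h1 := reg_zero h1 h2 (hsdef ▸ hs)
    refine habs (build_ext p hp π huniq hh hnone hvi hvj 0 1 2 3
      (by decide) (by decide) (by decide) (by decide) (by decide) (by decide)
      ![i, j, h1, h2] ?_ rfl rfl rfl rfl f hf
      (by rw [show c1 0 0 = (0 : Fin 4) from rfl] at hfa; exact hfa)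
      (by rw [show c2 0 0 = (1 : Fin 4) by decide] at hfb; exact hfb)
      (by rw [show c1 0 0 = (0 : Fin 4) from rfl, show c2 0 0 = (1 : Fin 4) by decide] at hfni; exact hfni))
    rw [Fin.strictMono_iff_lt_succ]
    intro k
    fin_cases k <;> simp <;> first | exact hij | exact pj1 | exact hh
  · -- (0,1)
    have pi1 : i < h1 := reg_zero h1 h2 (hrdef ▸ hr)
    have pj := reg_one h1 h2 (hsdef ▸ hs)
    have pj1 : h1 < j := lt_of_le_of_ne (not_lt.mp pj.1) (Ne.symm hjne1)
    refine habs (build_ext p hp π huniq hh hnone hvi hvj 0 2 1 3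
      (by decide) (by decide) (by decide) (by decide) (by decide) (by decide)
      ![i, h1, j, h2] ?_ rfl rfl rfl rfl f hf
      (by rw [show c1 0 1 = (0 : Fin 4) from rfl] at hfa; exact hfa)
      (by rw [show c2 0 1 = (2 : Fin 4) by decide] at hfb; exact hfb)
      (by rw [show c1 0 1 = (0 : Fin 4) from rfl, show c2 0 1 = (2 : Fin 4) by decide] at hfni; exact hfni))
    rw [Fin.strictMono_iff_lt_succ]
    intro k
    fin_cases k <;> simp <;> first | exact pi1 | exact pj1 | exact pj.2
  · -- (0,2)
    have pi1 : i < h1 := reg_zero h1 h2 (hrdef ▸ hr)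
    have pj := reg_two h1 h2 (hsdef ▸ hs)
    have pj1 : h2 < j := lt_of_le_of_ne (not_lt.mp pj) (Ne.symm hjne2)
    refine habs (build_ext p hp π huniq hh hnone hvi hvj 0 3 1 2
      (by decide) (by decide) (by decide) (by decide) (by decide) (by decide)
      ![i, h1, h2, j] ?_ rfl rfl rfl rfl f hf
      (by rw [show c1 0 2 = (0 : Fin 4) from rfl] at hfa; exact hfa)
      (by rw [show c2 0 2 = (3 : Fin 4) by decide] at hfb; exact hfb)
      (by rw [show c1 0 2 = (0 : Fin 4) from rfl, show c2 0 2 = (3 : Fin 4) by decide] at hfni; exact hfni))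
    rw [Fin.strictMono_iff_lt_succ]
    intro k
    fin_cases k <;> simp <;> first | exact pi1 | exact hh | exact pj1
  · -- (1,1)
    have pi := reg_one h1 h2 (hrdef ▸ hr)
    have pi1 : h1 < i := lt_of_le_of_ne (not_lt.mp pi.1) (Ne.symm hine1)
    have pj := reg_one h1 h2 (hsdef ▸ hs)
    refine habs (build_ext p hp π huniq hh hnone hvi hvj 1 2 0 3
      (by decide) (by decide) (by decide) (by decide) (by decide) (by decide)
      ![h1, i, j, h2] ?_ rfl rfl rfl rfl f hf
      (by rw [show c1 1 1 = (1 : Fin 4) from rfl] at hfa; exact hfa)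
      (by rw [show c2 1 1 = (2 : Fin 4) by decide] at hfb; exact hfb)
      (by rw [show c1 1 1 = (1 : Fin 4) from rfl, show c2 1 1 = (2 : Fin 4) by decide] at hfni; exact hfni))
    rw [Fin.strictMono_iff_lt_succ]
    intro k
    fin_cases k <;> simp <;> first | exact pi1 | exact hij | exact pj.2
  · -- (1,2)
    have pi := reg_one h1 h2 (hrdef ▸ hr)
    have pi1 : h1 < i := lt_of_le_of_ne (not_lt.mp pi.1) (Ne.symm hine1)
    have pj := reg_two h1 h2 (hsdef ▸ hs)
    have pj1 : h2 < j := lt_of_le_of_ne (not_lt.mp pj) (Ne.symm hjne2)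
    refine habs (build_ext p hp π huniq hh hnone hvi hvj 1 3 0 2
      (by decide) (by decide) (by decide) (by decide) (by decide) (by decide)
      ![h1, i, h2, j] ?_ rfl rfl rfl rfl f hf
      (by rw [show c1 1 2 = (1 : Fin 4) from rfl] at hfa; exact hfa)
      (by rw [show c2 1 2 = (3 : Fin 4) by decide] at hfb; exact hfb)
      (by rw [show c1 1 2 = (1 : Fin 4) from rfl, show c2 1 2 = (3 : Fin 4) by decide] at hfni; exact hfni))
    rw [Fin.strictMono_iff_lt_succ]
    intro k
    fin_cases k <;> simp <;> first | exact pi1 | exact pi.2 | exact pj1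
  · -- (2,2)
    have pi := reg_two h1 h2 (hrdef ▸ hr)
    have pi1 : h2 < i := lt_of_le_of_ne (not_lt.mp pi) (Ne.symm hine2)
    refine habs (build_ext p hp π huniq hh hnone hvi hvj 2 3 0 1
      (by decide) (by decide) (by decide) (by decide) (by decide) (by decide)
      ![h1, h2, i, j] ?_ rfl rfl rfl rfl f hf
      (by rw [show c1 2 2 = (2 : Fin 4) from rfl] at hfa; exact hfa)
      (by rw [show c2 2 2 = (3 : Fin 4) by decide] at hfb; exact hfb)
      (by rw [show c1 2 2 = (2 : Fin 4) from rfl, show c2 2 2 = (3 : Fin 4) by decide] at hfni; exact hfni))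
    rw [Fin.strictMono_iff_lt_succ]
    intro k
    fin_cases k <;> simp <;> first | exact hh | exact pi1 | exact hij
end NEC2

section UNIQ
variable (p : Fin 4 → Fin 4) {n : ℕ} (h1 h2 : Fin n)

lemma val_eq_card {π : Fin n → Option (Fin (n - 2))}
    (huniq : ∀ v : Fin (n - 2), ∃! y : Fin n, π y = some v)
    {x : Fin n} {vx : Fin (n - 2)} (hvx : π x = some vx) :
    (vx : ℕ) = (univ.filter fun y : Fin n => ∃ w, π y = some w ∧ w < vx).card := by
  rw [← Fin.card_Iio vx]
  refine Finset.card_bij (fun w (_ : w ∈ Finset.Iio vx) => (huniq w).choose) ?_ ?_ ?_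
  · intro w hw
    refine mem_filter.mpr ⟨mem_univ _, ⟨w, (huniq w).choose_spec.1, mem_Iio.mp hw⟩⟩
  · intro w hw w' hw' heq
    have s1 := (huniq w).choose_spec.1
    have s2 := (huniq w').choose_spec.1
    simp only at heq s1 s2
    rw [heq, s2] at s1
    exact (Option.some_inj.mp s1).symm
  · intro y hy
    obtain ⟨w, hwy, hlt⟩ := (mem_filter.mp hy).2
    exact ⟨w, mem_Iio.mpr hlt, ((huniq w).choose_spec.2 y hwy).symm⟩

lemma unique_avoider (hp : Function.Injective p) (hh : h1 < h2)
    (π π' : Fin n → Option (Fin (n - 2)))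
    (hnone : ∀ x, π x = none ↔ (x = h1 ∨ x = h2))
    (hnone' : ∀ x, π' x = none ↔ (x = h1 ∨ x = h2))
    (huniq : ∀ v : Fin (n - 2), ∃! y : Fin n, π y = some v)
    (huniq' : ∀ v : Fin (n - 2), ∃! y : Fin n, π' y = some v)
    (havoid : PPAvoids π p) (havoid' : PPAvoids π' p) : π = π' := by
  have hvis : ∀ (ρ : Fin n → Option (Fin (n - 2))),
      (∀ x, ρ x = none ↔ (x = h1 ∨ x = h2)) →
      ∀ x : Fin n, ¬(x = h1 ∨ x = h2) → ∃ w, ρ x = some w := by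
    intro ρ hn x hx
    rcases hw : ρ x with _ | w
    · exact absurd ((hn x).mp hw) hx
    · exact ⟨w, rfl⟩
  funext x
  by_cases hx : x = h1 ∨ x = h2
  · rw [(hnone x).mpr hx, (hnone' x).mpr hx]
  · obtain ⟨vx, hvx⟩ := hvis π hnone x hx
    obtain ⟨vx', hvx'⟩ := hvis π' hnone' x hx
    rw [hvx, hvx']
    have hne : ∀ (ρ : Fin n → Option (Fin (n - 2)))
        (hu : ∀ v : Fin (n - 2), ∃! y : Fin n, ρ y = some v)
        (y z : Fin n) (wy wz : Fin (n - 2)), y ≠ z → ρ y = some wy → ρ z = some wz →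
        wy ≠ wz := by
      intro ρ hu y z wy wz hyz hy hz hc
      obtain ⟨_, _, hw⟩ := hu wy
      exact hyz ((hw y hy).trans (hw z (hc ▸ hz)).symm)
    have hsets : (univ.filter fun y : Fin n => ∃ w, π y = some w ∧ w < vx)
        = (univ.filter fun y : Fin n => ∃ w, π' y = some w ∧ w < vx') := by
      ext y
      simp only [mem_filter, mem_univ, true_and]
      by_cases hy : y = h1 ∨ y = h2
      · constructor
        · rintro ⟨w, hw, _⟩
          rw [(hnone y).mpr hy] at hw; exact nomatch hw
        · rintro ⟨w, hw, _⟩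
          rw [(hnone' y).mpr hy] at hw; exact nomatch hw
      · obtain ⟨wy, hwy⟩ := hvis π hnone y hy
        obtain ⟨wy', hwy'⟩ := hvis π' hnone' y hy
        have hkey : wy < vx ↔ wy' < vx' := by
          rcases lt_trichotomy y x with hyx | hyx | hyx
          · rw [nec p h1 h2 hp π huniq hnone havoid hh hyx hwy hvx,
              nec p h1 h2 hp π' huniq' hnone' havoid' hh hyx hwy' hvx']
          · subst hyx
            rw [hwy] at hvx; rw [hwy'] at hvx'
            obtain rfl := Option.some_inj.mp hvx
            obtain rfl := Option.some_inj.mp hvx'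
            simp
          · have hR := nec p h1 h2 hp π huniq hnone havoid hh hyx hvx hwy
            have hR' := nec p h1 h2 hp π' huniq' hnone' havoid' hh hyx hvx' hwy'
            have hiff2 : vx < wy ↔ vx' < wy' := hR.trans hR'.symm
            have hne1 : wy ≠ vx := hne π huniq y x wy vx hyx.ne' hwy hvx
            have hne2 : wy' ≠ vx' := hne π' huniq' y x wy' vx' hyx.ne' hwy' hvx'
            constructor
            · intro h
              have hna : ¬ vx' < wy' := fun hc => (asymm h) (hiff2.mpr hc)
              exact (lt_or_gt_of_ne hne2).resolve_right hna
            · intro h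
              have hna : ¬ vx < wy := fun hc => (asymm h) (hiff2.mp hc)
              exact (lt_or_gt_of_ne hne1).resolve_right hna
        constructor
        · rintro ⟨w, hw, hlt⟩
          have hwweq : w = wy := by rw [hwy] at hw; exact (Option.some_inj.mp hw).symm
          subst hwweq
          exact ⟨wy', hwy', hkey.mp hlt⟩
        · rintro ⟨w, hw, hlt⟩
          have hwweq : w = wy' := by rw [hwy'] at hw; exact (Option.some_inj.mp hw).symm
          subst hwweq
          exact ⟨wy, hwy, hkey.mpr hlt⟩
    have h1v := val_eq_card huniq hvx
    have h2v := val_eq_card huniq' hvx'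
    rw [hsets] at h1v
    exact congrArg some (Fin.ext (h1v.trans h2v.symm))
end UNIQ

end PPaux

/-- For every pattern of length 4 other than `2413` and `3142` (the Baxter
permutations of length 4), `s_n^2(p) = C(n,2)` for all `n ≥ 2`. -/
theorem length_four_baxter_count (p : Fin 4 → Fin 4) (hp : Function.Bijective p)
    (h1 : p ≠ ![1, 3, 0, 2]) (h2 : p ≠ ![2, 0, 3, 1]) :
    ∀ n : ℕ, 2 ≤ n → snk n 2 p = n.choose 2 := by
  intro n _
  have hpi : Function.Injective p := hp.1
  have hordpair : ∀ (a b : Fin n), a ≠ b → ∃ u v : Fin n, u < v ∧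
      ({a, b} : Finset (Fin n)) = {u, v} := by
    intro a b hab
    rcases lt_or_gt_of_ne hab with h | h
    · exact ⟨a, b, h, rfl⟩
    · exact ⟨b, a, h, Finset.pair_comm a b⟩
  have key : Nat.card {π : Fin n → Option (Fin (n - 2)) // IsPPerm 2 π ∧ PPAvoids π p}
      = Nat.card {S : Finset (Fin n) // S.card = 2} := by
    apply Nat.card_eq_of_bijective
      (fun z => (⟨Finset.univ.filter (fun i => z.1 i = none), z.2.1.1⟩ :
        {S : Finset (Fin n) // S.card = 2}))
    constructor
    · rintro ⟨π, hπ1, hπ2⟩ ⟨π', hπ'1, hπ'2⟩ heq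
      simp only [Subtype.mk.injEq] at heq ⊢
      obtain ⟨a, b, hab, hFeq⟩ := Finset.card_eq_two.mp hπ1.1
      obtain ⟨u, v, huv, hpair⟩ := hordpair a b hab
      rw [hpair] at hFeq
      have hnone : ∀ x, π x = none ↔ (x = u ∨ x = v) := by
        intro x
        constructor
        · intro hx
          have : x ∈ Finset.univ.filter (fun i => π i = none) := by
            simp [hx]
          rw [hFeq] at this
          simpa using this
        · intro hx
          have : x ∈ ({u, v} : Finset (Fin n)) := by simpa using hx
          rw [← hFeq] at this
          simpa using this
      have hnone' : ∀ x, π' x = none ↔ (x = u ∨ x = v) := by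
        intro x
        constructor
        · intro hx
          have : x ∈ Finset.univ.filter (fun i => π' i = none) := by
            simp [hx]
          rw [← heq, hFeq] at this
          simpa using this
        · intro hx
          have : x ∈ ({u, v} : Finset (Fin n)) := by simpa using hx
          rw [← hFeq, heq] at this
          simpa using this
      exact PPaux.unique_avoider p u v hpi huv π π' hnone hnone' hπ1.2 hπ'1.2 hπ2 hπ'2
    · rintro ⟨S, hS⟩
      obtain ⟨a, b, hab, hSeq⟩ := Finset.card_eq_two.mp hS
      obtain ⟨u, v, huv, hpair⟩ := hordpair a b hab
      rw [hpair] at hSeq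
      refine ⟨⟨PPaux.pi0 p u v huv hpi h1 h2,
        PPaux.pi0_isPPerm p u v, PPaux.pi0_avoids p u v⟩, ?_⟩
      apply Subtype.ext
      simp only
      rw [hSeq]
      ext x
      simp [PPaux.pi0_none_iff, Finset.mem_insert]
  rw [snk, key, Nat.card_eq_fintype_card, Fintype.card_subtype]
  have hps : Finset.univ.filter (fun S : Finset (Fin n) => S.card = 2)
      = Finset.powersetCard 2 Finset.univ := by
    ext S
    simp [Finset.mem_powersetCard, Finset.subset_univ]
  rw [hps, Finset.card_powersetCard, Finset.card_univ, Fintype.card_fin]
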